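/- arXiv:2208.00184 — 3 statements merged into one kernel-verified Lean document; each statement's English description precedes it below -/
import Mathlib

section
/- In a directed acyclic graph, if u and v are adjacent (consecutive) in some topological ordering of the vertices and (u,v) is an edge, then contracting u and v does not create a directed cycle; equivalently, the contracted graph is still acyclic. -/
/-- Contract the edge `(u,v)` of a directed graph: `u` and `v` are merged into a
single node (represented by `u`); every edge other than `(u,v)` itself is
redirected accordingly. -/
def contractEdge {V : Type*} [DecidableEq V] (E : V → V → Prop) (u v : V) :
    V → V → Prop :=
  fun a b => ∃ x y, E x y ∧ ¬(x = u ∧ y = v) ∧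
    (if x = v then u else x) = a ∧ (if y = v then u else y) = b

/-- If `u` and `v` are consecutive in a topological ordering `σ` of a finite DAG
and `(u,v)` is an edge, then contracting `u` and `v` keeps the graph acyclic. -/
theorem stmt_1 {V : Type*} [Fintype V] [DecidableEq V] (E : V → V → Prop)
    (σ : V → ℕ) (hinj : Function.Injective σ)
    (htopo : ∀ a b, E a b → σ a < σ b)
    (u v : V) (huv : E u v) (hadj : σ v = σ u + 1) :
    ∀ a, ¬ Relation.TransGen (contractEdge E u v) a a := by
  have key : ∀ a b, contractEdge E u v a b → σ a < σ b := by
    rintro a b ⟨x, y, hxy, hne, ha, hb⟩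
    have hx := htopo x y hxy
    by_cases hxv : x = v <;> by_cases hyv : y = v <;>
      simp [hxv, hyv] at ha hb <;> subst ha <;> subst hb
    · subst hxv hyv; omega
    · subst hxv; omega
    · subst hyv
      have hxu : x ≠ u := fun h => hne ⟨h, rfl⟩
      have : σ x ≠ σ u := fun h => hxu (hinj h)
      omega
    · exact hx
  have mono : ∀ a b, Relation.TransGen (contractEdge E u v) a b → σ a < σ b := by
    intro a b h
    induction h with
    | single h => exact key _ _ h
    | tail h2 h3 ih => exact lt_trans ih (key _ _ h3)
  intro a h
  exact lt_irrefl _ (mono a a h)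
end

section
/- If merging an edge (u,v) in a DAG creates a directed cycle through the merged node x, then in the original graph there exists a directed path from u to v that does not use the edge (u,v). -/
/-- If merging the edge `(u,v)` of a finite DAG creates a directed cycle through
the merged node (represented by `u`), then the original graph has a directed
path from `u` to `v` not using the edge `(u,v)`. -/
theorem stmt_3 {V : Type*} [Fintype V] [DecidableEq V] (E : V → V → Prop)
    (hacyc : ∀ a, ¬ Relation.TransGen E a a) (u v : V) (huv : E u v)
    (hcyc : Relation.TransGen (contractEdge E u v) u u) :
    ∃ w, E u w ∧ w ≠ v ∧ Relation.ReflTransGen E w v := by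
  suffices h : ∀ b, Relation.TransGen (contractEdge E u v) u b →
      ∃ z, (if z = v then u else z) = b ∧
        (Relation.TransGen E v z ∨
          ∃ w, E u w ∧ w ≠ v ∧ Relation.ReflTransGen E w z) by
    obtain ⟨z, hz, hcase⟩ := h u hcyc
    by_cases hzv : z = v
    · rw [hzv] at hcase
      rcases hcase with h1 | ⟨w, hw1, hw2, hw3⟩
      · exact absurd h1 (hacyc v)
      · exact ⟨w, hw1, hw2, hw3⟩
    · simp only [if_neg hzv] at hz
      subst hz
      rcases hcase with h1 | ⟨w, hw1, hw2, hw3⟩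
      · exact absurd (h1.tail huv) (hacyc v)
      · exact ⟨w, hw1, hw2, hw3.tail huv⟩
  intro b hb
  induction hb with
  | single h =>
    obtain ⟨x, y, hxy, hne, hx, hy⟩ := h
    by_cases hxv : x = v
    · subst hxv
      exact ⟨y, hy, Or.inl (Relation.TransGen.single hxy)⟩
    · simp only [if_neg hxv] at hx
      subst hx
      have hyv : y ≠ v := fun hyv => hne ⟨rfl, hyv⟩
      exact ⟨y, hy, Or.inr ⟨y, hxy, hyv, Relation.ReflTransGen.refl⟩⟩
  | tail _ h ih =>
    obtain ⟨z, hz, hcase⟩ := ih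
    obtain ⟨x, y, hxy, hne, hx, hy⟩ := h
    by_cases hzx : z = x
    · subst hzx
      rcases hcase with h1 | ⟨w, hw1, hw2, hw3⟩
      · exact ⟨y, hy, Or.inl (h1.tail hxy)⟩
      · exact ⟨y, hy, Or.inr ⟨w, hw1, hw2, hw3.tail hxy⟩⟩
    · by_cases hxv : x = v
      · -- x = v, so z ≠ v and `if z = v then u else z = u` forces z = u
        subst hxv
        have hzv : z ≠ x := hzx
        rw [← hx] at hz
        simp only [if_pos rfl, if_neg hzv] at hz
        subst hz
        rcases hcase with h1 | ⟨w, hw1, hw2, hw3⟩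
        · exact absurd (h1.tail huv) (hacyc x)
        · exact ⟨y, hy, Or.inr ⟨w, hw1, hw2, (hw3.tail huv).tail hxy⟩⟩
      · -- x ≠ v, so z = v and x = u : a "break", restart at u
        simp only [if_neg hxv] at hx
        subst hx
        have hzv : z = v := by
          by_contra hzv
          simp only [if_neg hzv] at hz
          exact hzx hz
        rw [if_pos hzv] at hz
        subst hz
        have hyv : y ≠ v := fun h' => hne ⟨rfl, h'⟩
        exact ⟨y, hy, Or.inr ⟨y, hxy, hyv, Relation.ReflTransGen.refl⟩⟩
end

section
/- Merging a set S of vertices of a DAG into a single node (where S is a contiguous interval of some fixed topological ordering) yields an acyclic graph. -/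
/-- Contract a set `S` of vertices into a single node, represented by `r ∈ S`:
edges with both endpoints in `S` (in particular self-loops at the merged node)
are removed, edges between `S` and its complement are redirected to/from `r`. -/
def contractSet {V : Type*} (E : V → V → Prop) (S : V → Prop) [DecidablePred S]
    (r : V) : V → V → Prop :=
  fun a b => a ≠ b ∧ ∃ x y, E x y ∧
    (if S x then r else x) = a ∧ (if S y then r else y) = b

/-- Contracting a contiguous interval `S = σ⁻¹ [i, j]` of a topological
ordering `σ` of a finite DAG yields an acyclic graph. -/
theorem stmt_6 {V : Type*} [Fintype V] [DecidableEq V] (E : V → V → Prop)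
    (σ : V → ℕ) (hinj : Function.Injective σ)
    (htopo : ∀ a b, E a b → σ a < σ b)
    (i j : ℕ) (hij : i ≤ j) (r : V) (hr : i ≤ σ r ∧ σ r ≤ j) :
    ∀ a, ¬ Relation.TransGen
      (contractSet E (fun x => i ≤ σ x ∧ σ x ≤ j) r) a a := by
  set R := contractSet E (fun x => i ≤ σ x ∧ σ x ≤ j) r with hR
  have key : ∀ a b, R a b → σ a < σ b := by
    rintro a b ⟨hab, x, y, hxy, ha, hb⟩
    have hxy' := htopo x y hxy
    by_cases hx : i ≤ σ x ∧ σ x ≤ j <;> by_cases hy : i ≤ σ y ∧ σ y ≤ j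
    · rw [if_pos hx] at ha; rw [if_pos hy] at hb
      exact (hab (ha.symm.trans hb)).elim
    · rw [if_pos hx] at ha; rw [if_neg hy] at hb
      subst ha; subst hb; omega
    · rw [if_neg hx] at ha; rw [if_pos hy] at hb
      subst ha; subst hb; omega
    · rw [if_neg hx] at ha; rw [if_neg hy] at hb
      subst ha; subst hb; omega
  have main : ∀ a b, Relation.TransGen R a b → σ a < σ b := by
    intro a b h
    induction h with
    | single h => exact key _ _ h
    | tail _ h ih => exact ih.trans (key _ _ h)
  intro a h
  exact lt_irrefl _ (main a a h)
end
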